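/- arXiv:0704.1969 — 2 statements merged into one kernel-verified Lean document; each statement's English description precedes it below -/
import Mathlib

section
/- Let σ be an involution of the symmetric group S_n (σ∘σ = identity). Then the columns of the Young-Fibonacci insertion tableau P(σ) are exactly the cycles of σ: the height-2 columns of P(σ) are precisely the two-element sets {a, σ(a)} with σ(a) ≠ a (with the larger element on top), and the entries of the height-1 columns of P(σ) are precisely the fixed points of σ. -/
/-- A snakeshape: a composition all of whose parts equal 1 or 2, recorded as the
list of column heights, read left to right. -/
def IsSnakeshape (u : List ℕ) : Prop := ∀ p ∈ u, p = 1 ∨ p = 2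

/-- The shape (list of column heights, left to right) of a tableau given as a
list of columns, each column listed top to bottom. -/
def shapeOf (t : List (List ℕ)) : List ℕ := t.map List.length

/-- `t` is a standard Young–Fibonacci tableau of size `n`: columns are listed left
to right, each column top to bottom; every column has height 1 or 2; in each
column the top entry exceeds the bottom entry; every topmost entry exceeds all
entries in columns strictly to its right; and the entries are exactly `1,…,n`. -/
def IsYFT (n : ℕ) (t : List (List ℕ)) : Prop :=
  (∀ c ∈ t, c.length = 1 ∨ c.length = 2) ∧
  (∀ c ∈ t, List.Chain' (fun a b => b < a) c) ∧
  (∀ i j : ℕ, i < j → j < t.length →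
    ∀ a ∈ (t.getD i []).head?, ∀ x ∈ t.getD j [], x < a) ∧
  (t.flatten).Perm (List.range' 1 n)

/-- Auxiliary, fuelled version of the Young–Fibonacci insertion: reading the word
from right to left, each letter read gets matched to the largest not-yet-matched
letter occurring strictly to its left which exceeds it (forming a height-2 column,
larger letter on top), and otherwise stays single (a height-1 column); columns are
listed in the order in which their status was settled. -/
def insertColsAux : ℕ → List ℕ → List (List ℕ)
  | 0, _ => []
  | _, [] => []
  | fuel+1, w =>
    let x := w.getLast!
    let w' := w.dropLast
    match (w'.filter (fun y => decide (x < y))).max? with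
    | none => [x] :: insertColsAux fuel w'
    | some m => [m, x] :: insertColsAux fuel (w'.erase m)

/-- The Young–Fibonacci insertion tableau of a word. -/
def insertCols (w : List ℕ) : List (List ℕ) := insertColsAux w.length w

/-- The word `σ(1)⋯σ(n)` of a permutation of `{1,…,n}` (letters `1,…,n`). -/
def permWord {n : ℕ} (σ : Equiv.Perm (Fin n)) : List ℕ :=
  List.ofFn (fun i => (σ i : ℕ) + 1)

/-- min(t): read the columns right to left, each column top to bottom. -/
def minWord (t : List (List ℕ)) : List ℕ := t.reverse.flatten

/-- max(t): the top row left to right, then the bottom row right to left. -/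
def maxWord (t : List (List ℕ)) : List ℕ :=
  (t.filterMap fun c => if c.length = 2 then c.head? else none) ++
    (t.filterMap List.getLast?).reverse

/-- Number of inversions of a word: pairs of positions `p < q` with `w p > w q`. -/
def invCount (w : List ℕ) : ℕ :=
  ((Finset.range w.length ×ˢ Finset.range w.length).filter
    (fun p => p.1 < p.2 ∧ w.getD p.2 0 < w.getD p.1 0)).card

/-- `w'` is obtained from `w` by swapping two adjacent letters `x < y` (in this
order in `w`), thus creating exactly one more inversion. -/
def AdjSwap (w w' : List ℕ) : Prop :=
  ∃ l r : List ℕ, ∃ x y : ℕ, x < y ∧ w = l ++ x :: y :: r ∧ w' = l ++ y :: x :: r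

/-- The (right) weak order on words. -/
def WordWeakLe (w w' : List ℕ) : Prop := Relation.ReflTransGen AdjSwap w w'

/-- `Shift t t'`: `t'` is obtained from `t` by shifting one entry. Columns are
listed top to bottom, so `[b, a]` is the column with top `b`, bottom `a`. -/
inductive Shift : List (List ℕ) → List (List ℕ) → Prop
  /-- the bottom entry `a` of a height-2 column bumps up the single entry `c` of
  the column on its left; the top entry `b` falls down. -/
  | bump2 (l r : List (List ℕ)) (c b a : ℕ) :
      Shift (l ++ [[c], [b, a]] ++ r) (l ++ [[c, a], [b]] ++ r)
  /-- the entry `a` of a height-1 column bumps up the single entry `c` of the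
  column on its left; its own column disappears. -/
  | bump1 (l r : List (List ℕ)) (c a : ℕ) :
      Shift (l ++ [[c], [a]] ++ r) (l ++ [[c, a]] ++ r)
  /-- `a < c` replaces `c` at the bottom of the height-2 column on its left, and
  `c < b` takes the former place of `a`. -/
  | exch (l r : List (List ℕ)) (d c b a : ℕ) (h1 : a < c) (h2 : c < b) :
      Shift (l ++ [[d, c], [b, a]] ++ r) (l ++ [[d, a], [b, c]] ++ r)
  /-- `a < c` replaces `c` at the bottom of the height-2 column on its left; since
  `b < c`, `c` becomes a new height-1 column in between and `b` falls down. -/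
  | split2 (l r : List (List ℕ)) (d c b a : ℕ) (h1 : a < c) (h2 : b < c) :
      Shift (l ++ [[d, c], [b, a]] ++ r) (l ++ [[d, a], [c], [b]] ++ r)
  /-- `a < c` replaces `c` at the bottom of the height-2 column on its left; `c`
  becomes a new height-1 column and the height-1 column of `a` disappears. -/
  | split1 (l r : List (List ℕ)) (d c a : ℕ) (h1 : a < c) :
      Shift (l ++ [[d, c], [a]] ++ r) (l ++ [[d, a], [c]] ++ r)

/-- The bottom row of a tableau, read left to right: the bottom entries of the
height-2 columns together with the entries of the height-1 columns. -/
def bottomRow (t : List (List ℕ)) : List ℕ := t.filterMap List.getLast?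

/-- Generating relations of the canonical poset `P_t`: `canoGen t x y` means `x`
is covered... i.e. `x <_P y` is a generating relation: consecutive bottom-row
entries read right to left (rightmost lowest), and each top entry of a height-2
column below the corresponding bottom entry. -/
def canoGen (t : List (List ℕ)) (x y : ℕ) : Prop :=
  (∃ i : ℕ, i + 1 < (bottomRow t).length ∧
    (bottomRow t).getD (i + 1) 0 = x ∧ (bottomRow t).getD i 0 = y) ∨
  (∃ c ∈ t, c.length = 2 ∧ c.head? = some x ∧ c.getLast? = some y)

/-- `w` is (the word of) a linear extension of the canonical poset `P_t`. -/
def IsLinExt (t : List (List ℕ)) (w : List ℕ) : Prop :=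
  ∀ x y : ℕ, Relation.ReflTransGen (canoGen t) x y → x ≠ y →
    w.idxOf x < w.idxOf y

/-- The set of inversions of a word: pairs `(j, i)` with `i < j` such that `j`
occurs before `i`. -/
def InvSet (w : List ℕ) : Set (ℕ × ℕ) :=
  {p | p.2 < p.1 ∧ p.1 ∈ w ∧ p.2 ∈ w ∧ w.idxOf p.1 < w.idxOf p.2}

/-- The set of non-inversions of a word: pairs `(i, j)` with `i < j` such that `i`
occurs before `j`. -/
def NonInvSet (w : List ℕ) : Set (ℕ × ℕ) :=
  {p | p.1 < p.2 ∧ p.1 ∈ w ∧ p.2 ∈ w ∧ w.idxOf p.1 < w.idxOf p.2}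

/-- The row canonical tableau of shape `u` (size `n`): topmost cells are labelled
`n, n-1, …` from left to right, bottom cells of height-2 columns are labelled
`1, 2, …` from left to right. -/
def rTcols (n : ℕ) (u : List ℕ) : List (List ℕ) :=
  (List.range u.length).map (fun i =>
    if u.getD i 0 = 2 then [n - i, (u.take i).count 2 + 1] else [n - i])

/-- The column canonical tableau of shape `u`: cells are labelled `1, 2, …` taking
columns right to left, in each column the bottom cell before the top cell. -/
def cTcols (u : List ℕ) : List (List ℕ) :=
  (List.range u.length).map (fun i =>
    let s := u.sum - (u.take (i + 1)).sum
    if u.getD i 0 = 2 then [s + 2, s + 1] else [s + 1])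

/-- `t` is a semistandard Young–Fibonacci tableau of shape `u`: entries are
positive integers, in each column the top entry strictly exceeds the bottom one,
and every topmost entry is `≥` all entries in columns strictly to its right. -/
def IsSSYFT (u : List ℕ) (t : List (List ℕ)) : Prop :=
  shapeOf t = u ∧
  (∀ c ∈ t, List.Chain' (fun a b => b < a) c) ∧
  (∀ i j : ℕ, i < j → j < t.length →
    ∀ a ∈ (t.getD i []).head?, ∀ x ∈ t.getD j [], x ≤ a) ∧
  (∀ x ∈ t.flatten, 1 ≤ x)

/-- `t` has content `v`: for each `i`, `t` has exactly `v_i` entries equal to `i`.-/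
def ContentIs (v : List ℕ) (t : List (List ℕ)) : Prop :=
  ∀ i : ℕ, t.flatten.count (i + 1) = v.getD i 0

/-- The Young–Fibonacci number `N_{u,v}`: the number of semistandard
Young–Fibonacci tableaux of shape `u` and content `v`. -/
noncomputable def YFNumber (u v : List ℕ) : ℕ :=
  Nat.card {t : List (List ℕ) // IsSSYFT u t ∧ ContentIs v t}

/-- The multiset (as a list indexed by positions) `v^{1-}`: delete a part equal
to 1, or decrease a larger part by 1. -/
def vMinus (v : List ℕ) : List (List ℕ) :=
  (List.range v.length).map (fun p =>
    if v.getD p 0 = 1 then v.eraseIdx p else v.set p (v.getD p 0 - 1))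

/-- The list of snakeshapes covering `u` in the Young–Fibonacci lattice:
(i) prepend a part 1; (ii) replace the leftmost part equal to 1 by a 2;
(iii) if `u` starts with `k ≥ 1` parts equal to 2, insert a part 1 just after the
`i`-th part, `1 ≤ i ≤ k`. -/
def coversList (u : List ℕ) : List (List ℕ) :=
  [1 :: u] ++
    (if (u.takeWhile (fun p => decide (p = 2))).length < u.length then
      [u.take (u.takeWhile (fun p => decide (p = 2))).length ++
        2 :: u.drop ((u.takeWhile (fun p => decide (p = 2))).length + 1)]
    else []) ++
    ((List.range (u.takeWhile (fun p => decide (p = 2))).length).map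
      (fun i => u.insertIdx (i + 1) 1))

/-- Okada's analogue of the Kostka numbers (fuelled implementation of the
defining recurrences; `v.length` is enough fuel). -/
def OkadaKAux : ℕ → List ℕ → List ℕ → ℕ
  | _, [], [] => 1
  | fuel+1, 1 :: u, 1 :: v => OkadaKAux fuel u v
  | fuel+1, 2 :: u, 2 :: v => OkadaKAux fuel u v
  | _+1, 1 :: _, 2 :: _ => 0
  | fuel+1, 2 :: u, 1 :: v => ((coversList u).map (fun w => OkadaKAux fuel w v)).sum
  | _, _, _ => 0

/-- Okada's analogue `K_{u,v}` of the Kostka numbers, determined by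
`K_{∅,∅} = 1`, `K_{1u,1v} = K_{u,v}`, `K_{2u,2v} = K_{u,v}`, `K_{1u,2v} = 0` and
`K_{2u,1v} = Σ_{w covers u} K_{w,v}`. -/
def OkadaK (u v : List ℕ) : ℕ := OkadaKAux v.length u v

/-- The cells of a snakeshape `u`: pairs `(i, r)` with `i` the (0-based) column
index and `r = 0` for the bottom cell, `r = 1` for the top cell. -/
def cellsFinset (u : List ℕ) : Finset (ℕ × ℕ) :=
  (Finset.range u.length ×ˢ Finset.range 2).filter (fun p => p.2 < u.getD p.1 0)

/-- Generating relations of the poset `P_u` on the cells of `u`: the bottom-row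
cells read right to left form a chain (rightmost lowest), and the top cell of
each height-2 column lies strictly below its bottom cell. -/
def cellGen (u : List ℕ) (c c' : ℕ × ℕ) : Prop :=
  (∃ i : ℕ, i + 1 < u.length ∧ c = (i + 1, 0) ∧ c' = (i, 0)) ∨
  (∃ i : ℕ, i < u.length ∧ u.getD i 0 = 2 ∧ c = (i, 1) ∧ c' = (i, 0))

/-- The order relation of the poset `P_u`. -/
def cellLe (u : List ℕ) (c c' : ℕ × ℕ) : Prop :=
  Relation.ReflTransGen (cellGen u) c c'
lemma insertColsAux_nil (fuel : ℕ) : insertColsAux fuel [] = [] := by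
  cases fuel <;> rfl

lemma insertColsAux_cons (fuel : ℕ) (a : ℕ) (m : List ℕ) :
    insertColsAux (fuel+1) (a::m) =
      match ((a::m).dropLast.filter (fun y => decide ((a::m).getLast! < y))).max? with
      | none => [(a::m).getLast!] :: insertColsAux fuel ((a::m).dropLast)
      | some mm => [mm, (a::m).getLast!] ::
          insertColsAux fuel (((a::m).dropLast).erase mm) := rfl

lemma insertColsAux_concat (fuel : ℕ) (l : List ℕ) (x : ℕ) :
    insertColsAux (fuel+1) (l ++ [x]) =
      match (l.filter (fun y => decide (x < y))).max? with
      | none => [x] :: insertColsAux fuel l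
      | some m => [m, x] :: insertColsAux fuel (l.erase m) := by
  rcases l with _ | ⟨a, t⟩
  · rw [List.nil_append, insertColsAux_cons]
    simp [insertColsAux_nil, List.getLast!_cons_eq_getLastD]
  · rw [List.cons_append, insertColsAux_cons]
    have h1 : (a :: (t ++ [x])).getLast! = x :=
      List.getLast!_of_getLast? (by rw [← List.cons_append]; exact List.getLast?_concat)
    have h2 : (a :: (t ++ [x])).dropLast = a :: t := by
      rw [← List.cons_append]; exact List.dropLast_concat
    rw [h1, h2]

lemma insertColsAux_fuel : ∀ (n : ℕ) (w : List ℕ), w.length ≤ n →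
    ∀ f1, w.length ≤ f1 → insertColsAux f1 w = insertColsAux w.length w := by
  intro n
  induction n with
  | zero =>
    intro w hw f1 _
    have : w = [] := List.length_eq_zero_iff.mp (Nat.le_zero.mp hw)
    subst this; simp [insertColsAux_nil]
  | succ n ih =>
    intro w hw f1 h1
    rcases List.eq_nil_or_concat w with rfl | ⟨l, x, rfl⟩
    · simp [insertColsAux_nil]
    · rw [List.concat_eq_append] at *
      have hlen : (l ++ [x]).length = l.length + 1 := by simp
      rw [hlen] at hw h1 ⊢
      obtain ⟨g, rfl⟩ : ∃ g, f1 = g + 1 := ⟨f1 - 1, by omega⟩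
      rw [insertColsAux_concat g, insertColsAux_concat l.length]
      have hln : l.length ≤ n := by omega
      have hlg : l.length ≤ g := by omega
      cases hmax : (l.filter (fun y => decide (x < y))).max? with
      | none =>
        simp only []
        rw [ih l hln g hlg]
      | some m =>
        simp only []
        have he : (l.erase m).length ≤ l.length := (l.erase_sublist (a := m)).length_le
        rw [ih (l.erase m) (le_trans he hln) g (le_trans he hlg),
            ih (l.erase m) (le_trans he hln) l.length he]

lemma insertCols_concat (l : List ℕ) (x : ℕ) :
    insertCols (l ++ [x]) =
      match (l.filter (fun y => decide (x < y))).max? with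
      | none => [x] :: insertCols l
      | some m => [m, x] :: insertCols (l.erase m) := by
  unfold insertCols
  rw [show (l ++ [x]).length = l.length + 1 by simp, insertColsAux_concat]
  cases hmax : (l.filter (fun y => decide (x < y))).max? with
  | none => rfl
  | some m =>
    simp only []
    rw [insertColsAux_fuel (l.erase m).length (l.erase m) le_rfl l.length
      ((l.erase_sublist (a := m)).length_le)]

lemma insertCols_key : ∀ (N : ℕ) (L : List ℕ), L.length ≤ N →
    ∀ f : ℕ → ℕ, Function.Injective f → L.Pairwise (· < ·) →
    (∀ s ∈ L, f s ∈ L) → (∀ s ∈ L, f (f s) = s) →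
    (∀ x y : ℕ, [x, y] ∈ insertCols (L.map f) ↔
      ∃ a ∈ L, f a ≠ a ∧ x = max a (f a) ∧ y = min a (f a)) ∧
    (∀ x : ℕ, [x] ∈ insertCols (L.map f) ↔ ∃ a ∈ L, f a = a ∧ x = a) := by
  intro N
  induction N with
  | zero =>
    intro L hL f _ _ _ _
    have : L = [] := List.length_eq_zero_iff.mp (Nat.le_zero.mp hL)
    subst this
    simp [insertCols, insertColsAux_nil]
  | succ N ih =>
    intro L hL f hinj hsort hf1 hf2
    rcases List.eq_nil_or_concat L with rfl | ⟨M, s, rfl⟩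
    · simp [insertCols, insertColsAux_nil]
    · rw [List.concat_eq_append] at *
      have hpw := (List.pairwise_append.mp hsort)
      have hMs : ∀ t ∈ M, t < s := fun t ht => hpw.2.2 t ht s (by simp)
      have hMsort : M.Pairwise (· < ·) := hpw.1
      have hMnodup : M.Nodup := hMsort.nodup
      have hMlen : M.length ≤ N := by
        have : (M ++ [s]).length = M.length + 1 := by simp
        omega
      have hmap : (M ++ [s]).map f = M.map f ++ [f s] := by simp
      have hfsel : f s ∈ M ++ [s] := hf1 s (by simp)
      have hffs : f (f s) = s := hf2 s (by simp)
      rw [hmap]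
      by_cases hfs : f s = s
      · -- fixed point case
        have hf1' : ∀ t ∈ M, f t ∈ M := by
          intro t ht
          have h1 : f t ∈ M ++ [s] := hf1 t (by simp [ht])
          have h2 : f t ≠ s := by
            intro he
            have : f (f t) = t := hf2 t (by simp [ht])
            rw [he, hfs] at this
            exact absurd this.symm (ne_of_lt (hMs t ht))
          rcases List.mem_append.mp h1 with h | h
          · exact h
          · simp at h; exact absurd h h2
        have hfilter : (M.map f).filter (fun y => decide (f s < y)) = [] := by
          rw [List.filter_eq_nil_iff]
          intro y hy
          obtain ⟨t, ht, rfl⟩ := List.mem_map.mp hy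
          have : f t < s := hMs _ (hf1' t ht)
          simp only [decide_eq_true_eq, not_lt]
          omega
        rw [insertCols_concat, hfilter]
        simp only [List.max?_nil]
        obtain ⟨h2IH, h1IH⟩ := ih M hMlen f hinj hMsort hf1' (fun t ht => hf2 t (by simp [ht]))
        constructor
        · intro x y
          rw [List.mem_cons, h2IH]
          constructor
          · rintro (he | ⟨b, hb, hne, hx, hy⟩)
            · simp at he
            · exact ⟨b, by simp [hb], hne, hx, hy⟩
          · rintro ⟨b, hb, hne, hx, hy⟩
            rcases List.mem_append.mp hb with h | h
            · exact Or.inr ⟨b, h, hne, hx, hy⟩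
            · simp at h; subst h; exact absurd hfs hne
        · intro x
          rw [List.mem_cons, h1IH]
          constructor
          · rintro (he | ⟨b, hb, hfb, hx⟩)
            · have : x = f s := by simpa using he
              exact ⟨s, by simp, hfs, this.trans hfs⟩
            · exact ⟨b, by simp [hb], hfb, hx⟩
          · rintro ⟨b, hb, hfb, hx⟩
            rcases List.mem_append.mp hb with h | h
            · exact Or.inr ⟨b, h, hfb, hx⟩
            · simp at h; subst h; left; simp [hx, hfb, hfs]
      · -- matched pair case
        have haM : f s ∈ M := by
          rcases List.mem_append.mp hfsel with h | h
          · exact h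
          · simp at h; exact absurd h hfs
        have hals : f s < s := hMs _ haM
        have hsmem : s ∈ M.map f := List.mem_map.mpr ⟨f s, haM, hffs⟩
        have hub : ∀ y ∈ M.map f, y ≤ s := by
          intro y hy
          obtain ⟨t, ht, rfl⟩ := List.mem_map.mp hy
          have h1 : f t ∈ M ++ [s] := hf1 t (by simp [ht])
          rcases List.mem_append.mp h1 with h | h
          · exact le_of_lt (hMs _ h)
          · simp at h; omega
        have hfilter : ((M.map f).filter (fun y => decide (f s < y))).max? = some s := by
          rw [List.max?_eq_some_iff']
          constructor
          · exact List.mem_filter.mpr ⟨hsmem, by simpa using hals⟩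
          · intro y hy
            exact hub y (List.mem_of_mem_filter hy)
        rw [insertCols_concat, hfilter]
        simp only []
        have herase : (M.map f).erase s = (M.erase (f s)).map f := by
          have h := List.map_erase hinj (a := f s) M
          rw [hffs] at h
          exact h.symm
        rw [herase]
        have hf1'' : ∀ t ∈ M.erase (f s), f t ∈ M.erase (f s) := by
          intro t ht
          obtain ⟨htne, htM⟩ := (hMnodup.mem_erase_iff).mp ht
          have h1 : f t ∈ M ++ [s] := hf1 t (by simp [htM])
          have h2 : f t ≠ s := by
            intro he
            have ht' := hf2 t (by simp [htM])
            rw [he] at ht'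
            exact htne ht'.symm
          have h3 : f t ∈ M := by
            rcases List.mem_append.mp h1 with h | h
            · exact h
            · simp at h; exact absurd h h2
          have h4 : f t ≠ f s := by
            intro he
            have : t = s := hinj he
            exact absurd (hMs t htM) (by omega)
          exact (hMnodup.mem_erase_iff).mpr ⟨h4, h3⟩
        have hlen'' : (M.erase (f s)).length ≤ N :=
          le_trans ((M.erase_sublist (a := f s)).length_le) hMlen
        have hsort'' : (M.erase (f s)).Pairwise (· < ·) :=
          List.Pairwise.sublist (M.erase_sublist (a := f s)) hMsort
        have hf2'' : ∀ t ∈ M.erase (f s), f (f t) = t := fun t ht =>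
          hf2 t (by simp [((hMnodup.mem_erase_iff).mp ht).2])
        obtain ⟨h2IH, h1IH⟩ := ih (M.erase (f s)) hlen'' f hinj hsort'' hf1'' hf2''
        have hmaxs : max s (f s) = s := max_eq_left hals.le
        have hmins : min s (f s) = f s := min_eq_right hals.le
        have hmaxs' : max (f s) s = s := max_eq_right hals.le
        have hmins' : min (f s) s = f s := min_eq_left hals.le
        constructor
        · intro x y
          rw [List.mem_cons, h2IH]
          constructor
          · rintro (he | ⟨b, hb, hne, hx, hy⟩)
            · obtain ⟨hx, hy⟩ : x = s ∧ y = f s := by simpa using he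
              exact ⟨s, by simp, hfs, by rw [hx, hmaxs], by rw [hy, hmins]⟩
            · exact ⟨b, by simp [((hMnodup.mem_erase_iff).mp hb).2], hne, hx, hy⟩
          · rintro ⟨b, hb, hne, hx, hy⟩
            rcases List.mem_append.mp hb with h | h
            · by_cases hbfs : b = f s
              · subst hbfs
                left
                rw [hx, hy, hffs, hmaxs', hmins']
              · exact Or.inr ⟨b, (hMnodup.mem_erase_iff).mpr ⟨hbfs, h⟩, hne, hx, hy⟩
            · simp at h; subst h
              left
              rw [hx, hy, hmaxs, hmins]
        · intro x
          rw [List.mem_cons, h1IH]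
          constructor
          · rintro (he | ⟨b, hb, hfb, hx⟩)
            · simp at he
            · exact ⟨b, by simp [((hMnodup.mem_erase_iff).mp hb).2], hfb, hx⟩
          · rintro ⟨b, hb, hfb, hx⟩
            rcases List.mem_append.mp hb with h | h
            · right
              refine ⟨b, (hMnodup.mem_erase_iff).mpr ⟨?_, h⟩, hfb, hx⟩
              intro he
              subst he
              exact absurd (hfb.symm.trans hffs) (ne_of_lt (hMs _ haM))
            · simp at h; subst h; exact absurd hfb hfs

/-- for an involution `σ`, the height-2 columns of `P(σ)` are exactly
the pairs `{a, σ(a)}` with `σ(a) ≠ a` (larger on top), and the height-1 columns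
are exactly the fixed points of `σ` (letters written `1`-based). -/
theorem involution_insertion_tableau_columns_are_cycles (n : ℕ)
    (σ : Equiv.Perm (Fin n)) (hσ : ∀ a, σ (σ a) = a) :
    (∀ x y : ℕ, [x, y] ∈ insertCols (permWord σ) ↔
      ∃ a : Fin n, σ a ≠ a ∧ x = max ((a : ℕ) + 1) ((σ a : ℕ) + 1) ∧
        y = min ((a : ℕ) + 1) ((σ a : ℕ) + 1)) ∧
    (∀ x : ℕ, [x] ∈ insertCols (permWord σ) ↔
      ∃ a : Fin n, σ a = a ∧ x = (a : ℕ) + 1) := by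
  classical
  set f : ℕ → ℕ :=
    fun x => if h : 1 ≤ x ∧ x ≤ n then ((σ ⟨x - 1, by omega⟩ : ℕ) + 1) else x with hfdef
  have hval : ∀ x (h1 : 1 ≤ x) (h2 : x ≤ n), f x = (σ ⟨x - 1, by omega⟩ : ℕ) + 1 := by
    intro x h1 h2
    simp only [hfdef, dif_pos (And.intro h1 h2)]
  have hrange : ∀ x, 1 ≤ x → x ≤ n → 1 ≤ f x ∧ f x ≤ n := by
    intro x h1 h2
    rw [hval x h1 h2]
    have := (σ ⟨x - 1, by omega⟩).isLt
    omega
  have hinv : ∀ x, f (f x) = x := by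
    intro x
    by_cases h : 1 ≤ x ∧ x ≤ n
    · obtain ⟨h1, h2⟩ := h
      have hr := hrange x h1 h2
      rw [hval x h1 h2] at hr
      rw [hval x h1 h2, hval _ hr.1 hr.2]
      simp only [Nat.add_sub_cancel, Fin.eta, hσ]
      omega
    · have hfx : f x = x := by simp only [hfdef, dif_neg h]
      rw [hfx, hfx]
  have hinj : Function.Injective f := Function.Involutive.injective hinv
  have hword : permWord σ = (List.range' 1 n).map f := by
    apply List.ext_getElem
    · simp [permWord]
    · intro i h1 h2
      have hi : i < n := by simpa [permWord] using h1
      simp only [permWord, List.getElem_ofFn, List.getElem_map, List.getElem_range']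
      rw [hval (1 + 1 * i) (by omega) (by omega)]
      have : (⟨1 + 1 * i - 1, by omega⟩ : Fin n) = ⟨i, hi⟩ := Fin.ext (by simp)
      rw [this]
  have hsorted : (List.range' 1 n).Pairwise (· < ·) := by
    have := List.pairwise_lt_range' (s := 1) (n := n) 1 (by omega)
    simpa [List.Pairwise] using this
  have hmem1 : ∀ x ∈ List.range' 1 n, f x ∈ List.range' 1 n := by
    intro x hx
    rw [List.mem_range'_1] at hx ⊢
    have := hrange x hx.1 (by omega)
    omega
  have hmem2 : ∀ x ∈ List.range' 1 n, f (f x) = x := fun x _ => hinv x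
  obtain ⟨C2, C1⟩ := insertCols_key n (List.range' 1 n) (by simp) f hinj hsorted hmem1 hmem2
  rw [hword]
  constructor
  · intro x y
    rw [C2 x y]
    constructor
    · rintro ⟨b, hb, hne, hx, hy⟩
      rw [List.mem_range'_1] at hb
      have hb1 : 1 ≤ b := hb.1
      have hb2 : b ≤ n := by omega
      refine ⟨⟨b - 1, by omega⟩, ?_, ?_, ?_⟩
      · intro he
        apply hne
        rw [hval b hb1 hb2, he]
        simp only [Fin.val_mk]
        omega
      · rw [hx, hval b hb1 hb2]
        have : ((⟨b - 1, by omega⟩ : Fin n) : ℕ) + 1 = b := by simp; omega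
        rw [this]
      · rw [hy, hval b hb1 hb2]
        have : ((⟨b - 1, by omega⟩ : Fin n) : ℕ) + 1 = b := by simp; omega
        rw [this]
    · rintro ⟨a, hne, hx, hy⟩
      have han := a.isLt
      have hv : f ((a : ℕ) + 1) = (σ a : ℕ) + 1 := by
        rw [hval _ (by omega) (by omega)]
        simp only [Nat.add_sub_cancel, Fin.eta]
      refine ⟨(a : ℕ) + 1, ?_, ?_, ?_, ?_⟩
      · rw [List.mem_range'_1]; omega
      · rw [hv]
        intro he
        exact hne (Fin.ext (by omega))
      · rw [hx, hv]
      · rw [hy, hv]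
  · intro x
    rw [C1 x]
    constructor
    · rintro ⟨b, hb, hfb, hx⟩
      rw [List.mem_range'_1] at hb
      have hb1 : 1 ≤ b := hb.1
      have hb2 : b ≤ n := by omega
      refine ⟨⟨b - 1, by omega⟩, ?_, ?_⟩
      · apply Fin.ext
        rw [hval b hb1 hb2] at hfb
        simp only [Fin.val_mk]
        omega
      · simp only [Fin.val_mk]
        omega
    · rintro ⟨a, hfa, hx⟩
      have han := a.isLt
      have hv : f ((a : ℕ) + 1) = (σ a : ℕ) + 1 := by
        rw [hval _ (by omega) (by omega)]
        simp only [Nat.add_sub_cancel, Fin.eta]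
      refine ⟨(a : ℕ) + 1, ?_, ?_, hx⟩
      · rw [List.mem_range'_1]; omega
      · rw [hv, hfa]
end

section
/- The Young-Fibonacci numbers N_{u,v} satisfy the recurrences: N_{∅,∅} = 1; N_{2,2} = 0; N_{1u,v1} = N_{u,v}; N_{1u,v2} = N_{u,v1}; N_{2u,v1} = Σ_{w ∈ v^{1−}} N_{u,w}; and N_{2u,v2} = Σ_{w ∈ v^{1−}} N_{u,w1}; here 1u (resp. 2u) denotes the snakeshape obtained from u by prepending a part 1 (resp. 2), v1 (resp. v2, w1) denotes the composition obtained by appending a part 1 (resp. 2, 1) at the right end, and v^{1−} denotes the multiset of compositions obtained from v by choosing one position of v and either deleting the part at that position if it equals 1 or decreasing it by 1 if it equals 2; the sums are taken with multiplicity over this multiset. -/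
-- membership helpers
lemma mem_getD_flatten {t : List (List ℕ)} {j : ℕ} (hj : j < t.length) {x : ℕ}
    (hx : x ∈ t.getD j []) : x ∈ t.flatten := by
  rw [List.getD_eq_getElem t [] hj] at hx
  exact List.mem_flatten.mpr ⟨t[j], List.getElem_mem hj, hx⟩

lemma exists_getD {t : List (List ℕ)} {d : List ℕ} (hd : d ∈ t) :
    ∃ j, j < t.length ∧ t.getD j [] = d := by
  obtain ⟨j, hj, rfl⟩ := List.mem_iff_getElem.mp hd
  exact ⟨j, hj, List.getD_eq_getElem t [] hj⟩

lemma ssyft_cons_iff {k : ℕ} {u : List ℕ} {col : List ℕ} {t : List (List ℕ)} :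
    IsSSYFT (k :: u) (col :: t) ↔
      col.length = k ∧ List.Chain' (fun a b => b < a) col ∧
      (∀ a ∈ col.head?, ∀ x ∈ t.flatten, x ≤ a) ∧
      (∀ x ∈ col, 1 ≤ x) ∧ IsSSYFT u t := by
  constructor
  · rintro ⟨h1, h2, h3, h4⟩
    simp only [shapeOf, List.map_cons, List.cons.injEq] at h1
    refine ⟨h1.1, h2 col (by simp), ?_, ?_, h1.2, ?_, ?_, ?_⟩
    · intro a ha x hx
      obtain ⟨d, hd, hxd⟩ := List.mem_flatten.mp hx
      obtain ⟨j, hj, hjd⟩ := exists_getD hd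
      exact h3 0 (j+1) (Nat.succ_pos j) (by simpa using hj) a ha x (by rw [List.getD_cons_succ, hjd]; exact hxd)
    · intro x hx; exact h4 x (by simp [hx])
    · exact fun c hc => h2 c (by simp [hc])
    · intro i j hij hj a ha x hx
      exact h3 (i+1) (j+1) (by omega) (by simpa using hj) a ha x hx
    · intro x hx; exact h4 x (by simp; right; exact List.mem_flatten.mp hx)
  · rintro ⟨h1, h2, h3, h4, g1, g2, g3, g4⟩
    refine ⟨by simp only [shapeOf, List.map_cons, h1]; exact congrArg _ g1, ?_, ?_, ?_⟩
    · intro c hc; rcases List.mem_cons.mp hc with rfl | hc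
      · exact h2
      · exact g2 c hc
    · intro i j hij hj a ha x hx
      match i, j with
      | 0, (j+1) =>
        exact h3 a ha x (mem_getD_flatten (by simpa using hj) hx)
      | (i+1), (j+1) =>
        exact g3 i j (by omega) (by simpa using hj) a ha x hx
    · intro x hx
      rcases List.mem_append.mp (by rw [← List.flatten_cons]; exact hx) with h | h
      · exact h4 x h
      · exact g4 x h

section
variable {α : Type*}

-- getD facts
lemma getD_append_nat (v : List ℕ) (c i : ℕ) :
    (v ++ [c]).getD i 0 = if i < v.length then v.getD i 0 else if i = v.length then c else 0 := by
  split_ifs with h1 h2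
  · rw [List.getD_append _ _ _ _ h1]
  · subst h2; rw [List.getD_eq_getElem _ _ (by simp)]; simp
  · rw [List.getD_eq_default _ _ (by simp; omega)]

lemma getD_set_nat (v : List ℕ) (p x i : ℕ) (hp : p < v.length) :
    (v.set p x).getD i 0 = if i = p then x else v.getD i 0 := by
  by_cases hi : i < v.length
  · rw [List.getD_eq_getElem _ _ (by simpa using hi), List.getElem_set,
      List.getD_eq_getElem _ _ hi]
    by_cases h : i = p
    · simp [h]
    · simp [h, Ne.symm h]
  · rw [List.getD_eq_default _ _ (by simpa using not_lt.mp hi),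
      List.getD_eq_default _ _ (not_lt.mp hi)]
    split_ifs with h; omega; rfl

lemma getD_eraseIdx_nat (v : List ℕ) (p i : ℕ) (hp : p < v.length) :
    (v.eraseIdx p).getD i 0 = if i < p then v.getD i 0 else v.getD (i+1) 0 := by
  by_cases hi : i < v.length - 1
  · rw [List.getD_eq_getElem _ _ (by rw [List.length_eraseIdx_of_lt hp]; exact hi),
      List.getElem_eraseIdx]
    split_ifs with h
    · rw [List.getD_eq_getElem _ _ (by omega)]
    · rw [List.getD_eq_getElem _ _ (by omega)]
  · rw [List.getD_eq_default _ _ (by rw [List.length_eraseIdx_of_lt hp]; omega)]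
    have : ¬ i < p := by omega
    rw [if_neg this, List.getD_eq_default _ _ (by omega)]
end

def relDown (a x : ℕ) : ℕ := if a < x then x - 1 else x
def relUp (a x : ℕ) : ℕ := if a ≤ x then x + 1 else x

lemma relUp_relDown {a x : ℕ} (hx : x ≠ a) : relUp a (relDown a x) = x := by
  unfold relDown relUp; split_ifs <;> omega

lemma relDown_relUp (a x : ℕ) : relDown a (relUp a x) = x := by
  unfold relDown relUp; split_ifs <;> omega

lemma relDown_mono (a : ℕ) : Monotone (relDown a) := by
  intro x y h; unfold relDown; split_ifs <;> omega

lemma relUp_strictMono (a : ℕ) : StrictMono (relUp a) := by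
  intro x y h; unfold relUp; split_ifs <;> omega

lemma count_map_relDown (a j : ℕ) (l : List ℕ) (ha : a ∉ l) :
    (l.map (relDown a)).count j = if j < a then l.count j else l.count (j + 1) := by
  induction l with
  | nil => simp
  | cons x l ih =>
    simp only [List.mem_cons, not_or] at ha
    have hxa := ha.1
    simp only [List.map_cons, List.count_cons, ih ha.2, beq_iff_eq, relDown]
    split_ifs <;> omega

lemma count_map_relUp (a j : ℕ) (l : List ℕ) :
    (l.map (relUp a)).count j =
      if j < a then l.count j else if j = a then 0 else l.count (j - 1) := by
  induction l with
  | nil => simp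
  | cons x l ih =>
    simp only [List.map_cons, List.count_cons, ih, beq_iff_eq, relUp]
    split_ifs <;> omega

def mapT (f : ℕ → ℕ) (t : List (List ℕ)) : List (List ℕ) := t.map (List.map f)

lemma getD_mapT (f : ℕ → ℕ) (t : List (List ℕ)) (i : ℕ) :
    (mapT f t).getD i [] = (t.getD i []).map f := by
  by_cases hi : i < t.length
  · rw [List.getD_eq_getElem _ _ (by simpa [mapT] using hi), List.getD_eq_getElem _ _ hi]
    simp [mapT]
  · rw [List.getD_eq_default _ _ (by simpa [mapT] using not_lt.mp hi),
      List.getD_eq_default _ _ (not_lt.mp hi)]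
    rfl

lemma flatten_mapT (f : ℕ → ℕ) (t : List (List ℕ)) :
    (mapT f t).flatten = t.flatten.map f := by
  simp [mapT, List.map_flatten]

lemma mapT_ssyft {f : ℕ → ℕ} {u : List ℕ} {t : List (List ℕ)}
    (h : IsSSYFT u t) (hmono : Monotone f)
    (hstrict : ∀ x ∈ t.flatten, ∀ y ∈ t.flatten, x < y → f x < f y)
    (hpos : ∀ x ∈ t.flatten, 1 ≤ f x) : IsSSYFT u (mapT f t) := by
  obtain ⟨h1, h2, h3, h4⟩ := h
  haveI : IsTrans ℕ (fun a b => b < a) := ⟨fun a b c h1 h2 => lt_trans h2 h1⟩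
  refine ⟨?_, ?_, ?_, ?_⟩
  · rw [← h1]; simp [mapT, shapeOf]
  · intro c hc
    obtain ⟨d, hd, rfl⟩ := List.mem_map.mp hc
    rw [List.Chain', List.isChain_iff_pairwise, List.pairwise_map]
    refine (List.isChain_iff_pairwise.mp (h2 d hd)).imp_of_mem ?_
    intro x y hx hy hxy
    exact hstrict y (List.mem_flatten.mpr ⟨d, hd, hy⟩) x (List.mem_flatten.mpr ⟨d, hd, hx⟩) hxy
  · intro i j hij hj a ha x hx
    rw [getD_mapT] at ha hx
    rw [List.head?_map] at ha
    obtain ⟨a0, ha0, rfl⟩ := Option.map_eq_some_iff.mp ha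
    obtain ⟨x0, hx0, rfl⟩ := List.mem_map.mp hx
    exact hmono (h3 i j hij (by simpa [mapT] using hj) a0 ha0 x0 hx0)
  · intro x hx
    rw [flatten_mapT] at hx
    obtain ⟨x0, hx0, rfl⟩ := List.mem_map.mp hx
    exact hpos x0 hx0

-- entries bounded by content length
lemma entries_le {u v : List ℕ} {t : List (List ℕ)} (h : IsSSYFT u t) (hc : ContentIs v t) :
    ∀ x ∈ t.flatten, x ≤ v.length := by
  intro x hx
  by_contra hgt
  have h1 : 1 ≤ x := h.2.2.2 x hx
  have h2 := hc (x - 1)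
  rw [List.getD_eq_default _ _ (by omega), show x - 1 + 1 = x by omega] at h2
  have h3 := List.count_pos_iff.mpr hx
  omega

lemma mem_of_content_pos {v : List ℕ} {t : List (List ℕ)} (hc : ContentIs v t) {i : ℕ}
    (hi : 1 ≤ v.getD i 0) : (i + 1) ∈ t.flatten := by
  have := hc i
  exact List.count_pos_iff.mp (by omega)

-- finiteness
lemma finite_bdd (B k : ℕ) : {l : List ℕ | l.length ≤ k ∧ ∀ x ∈ l, x ≤ B}.Finite := by
  induction k with
  | zero =>
    apply Set.Finite.subset (Set.finite_singleton ([] : List ℕ))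
    rintro l ⟨h1, _⟩
    simp [List.length_eq_zero_iff.mp (Nat.le_zero.mp h1)]
  | succ k ih =>
    apply Set.Finite.subset (((Set.finite_Iic B).image2 List.cons ih).insert [])
    rintro l ⟨h1, h2⟩
    cases l with
    | nil => exact Set.mem_insert _ _
    | cons x l =>
      exact Set.mem_insert_of_mem _ (Set.mem_image2.mpr ⟨x, h2 x (by simp), l,
        ⟨by simpa using h1, fun y hy => h2 y (by simp [hy])⟩, rfl⟩)

lemma finite_bdd2 (B k n : ℕ) :
    {t : List (List ℕ) | t.length ≤ n ∧ ∀ c ∈ t, c.length ≤ k ∧ ∀ x ∈ c, x ≤ B}.Finite := by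
  induction n with
  | zero =>
    apply Set.Finite.subset (Set.finite_singleton ([] : List (List ℕ)))
    rintro l ⟨h1, _⟩
    simp [List.length_eq_zero_iff.mp (Nat.le_zero.mp h1)]
  | succ n ih =>
    apply Set.Finite.subset (((finite_bdd B k).image2 List.cons ih).insert [])
    rintro l ⟨h1, h2⟩
    cases l with
    | nil => exact Set.mem_insert _ _
    | cons c l =>
      exact Set.mem_insert_of_mem _ (Set.mem_image2.mpr ⟨c, h2 c (by simp), l,
        ⟨by simpa using h1, fun d hd => h2 d (by simp [hd])⟩, rfl⟩)

lemma finite_fiber (u v : List ℕ) : Finite {t : List (List ℕ) // IsSSYFT u t ∧ ContentIs v t} := by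
  have : {t : List (List ℕ) | IsSSYFT u t ∧ ContentIs v t}.Finite := by
    apply Set.Finite.subset (finite_bdd2 v.length u.sum u.length)
    rintro t ⟨hS, hC⟩
    have hlen : t.length = u.length := by rw [← hS.1]; simp [shapeOf]
    refine ⟨hlen.le, fun c hc => ⟨?_, fun x hx => entries_le hS hC x (List.mem_flatten.mpr ⟨c, hc, hx⟩)⟩⟩
    have : c.length ∈ u := by rw [← hS.1]; exact List.mem_map.mpr ⟨c, hc, rfl⟩
    exact List.le_sum_of_mem this
  exact this.to_subtype

lemma count_single (i b : ℕ) : List.count (i+1) [b+1] = if i = b then 1 else 0 := by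
  simp only [List.count_cons, List.count_nil, beq_iff_eq, Nat.zero_add]
  split_ifs <;> omega

lemma head_eq {k c : ℕ} {u v : List ℕ} {col : List ℕ} {t' : List (List ℕ)}
    (hS : IsSSYFT (k :: u) (col :: t')) (hC : ContentIs (v ++ [c]) (col :: t'))
    (hk : 1 ≤ k) (hc : 1 ≤ c) : col.head? = some (v.length + 1) := by
  haveI : IsTrans ℕ (fun a b => b < a) := ⟨fun a b c h1 h2 => lt_trans h2 h1⟩
  obtain ⟨h1, h2, h3, h4, h5⟩ := ssyft_cons_iff.mp hS
  obtain ⟨h, rest, rfl⟩ : ∃ h rest, col = h :: rest := by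
    cases col with
    | nil => simp at h1; omega
    | cons h rest => exact ⟨h, rest, rfl⟩
  have hmax : ∀ y ∈ rest, y < h := by
    have := List.isChain_iff_pairwise.mp h2
    exact (List.pairwise_cons.mp this).1
  have hmem : (v.length + 1) ∈ ((h :: rest) :: t').flatten := by
    apply mem_of_content_pos hC
    rw [getD_append_nat]
    simp; omega
  have hle : h ≤ v.length + 1 := by
    have := entries_le hS hC h (by simp)
    simpa using this
  have hge : v.length + 1 ≤ h := by
    rcases List.mem_append.mp (by rw [← List.flatten_cons]; exact hmem) with hm | hm
    · rcases List.mem_cons.mp hm with rfl | hm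
      · exact le_refl _
      · exact (hmax _ hm).le
    · exact h3 h rfl _ hm
  simp [le_antisymm hle hge]

lemma P34 (u v : List ℕ) (c : ℕ) (hc : 1 ≤ c) :
    Nat.card {t : List (List ℕ) // IsSSYFT (1 :: u) t ∧ ContentIs (v ++ [c]) t}
      = Nat.card {t : List (List ℕ) // IsSSYFT u t ∧ ContentIs (v ++ [c - 1]) t} := by
  apply Nat.card_congr
  have key : ∀ t, (IsSSYFT (1 :: u) t ∧ ContentIs (v ++ [c]) t) →
      t = [v.length + 1] :: t.tail ∧ (IsSSYFT u t.tail ∧ ContentIs (v ++ [c - 1]) t.tail) := by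
    rintro t ⟨hS, hC⟩
    cases t with
    | nil => exact absurd hS.1 (by simp [shapeOf])
    | cons col t' =>
      obtain ⟨h1, h2, h3, h4, h5⟩ := ssyft_cons_iff.mp hS
      have hh := head_eq hS hC le_rfl hc
      obtain ⟨x, rfl⟩ := List.length_eq_one_iff.mp h1
      have hx : x = v.length + 1 := by simpa using hh
      subst hx
      refine ⟨rfl, ?_⟩
      simp only [List.tail_cons]
      refine ⟨h5, fun i => ?_⟩
      have h := hC i
      rw [List.flatten_cons, List.count_append, count_single, getD_append_nat] at h
      rw [getD_append_nat]
      split_ifs at h ⊢ <;> omega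
  have key2 : ∀ t, (IsSSYFT u t ∧ ContentIs (v ++ [c - 1]) t) →
      (IsSSYFT (1 :: u) ([v.length + 1] :: t) ∧ ContentIs (v ++ [c]) ([v.length + 1] :: t)) := by
    rintro t ⟨hS, hC⟩
    constructor
    · rw [ssyft_cons_iff]
      refine ⟨rfl, List.isChain_singleton _, ?_, by simp, hS⟩
      intro a ha x hx
      have ha' : a = v.length + 1 := by simpa using ha.symm
      have := entries_le hS hC x hx
      simp at this; omega
    · intro i
      have h := hC i
      rw [List.flatten_cons, List.count_append, count_single, getD_append_nat]
      rw [getD_append_nat] at h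
      split_ifs at h ⊢ <;> omega
  exact ⟨fun x => ⟨x.1.tail, (key x.1 x.2).2⟩, fun y => ⟨[v.length + 1] :: y.1, key2 y.1 y.2⟩,
    fun x => Subtype.ext (key x.1 x.2).1.symm, fun y => Subtype.ext rfl⟩

def gPart (v : List ℕ) (p : ℕ) : List ℕ :=
  if v.getD p 0 = 1 then v.eraseIdx p else v.set p (v.getD p 0 - 1)

def bot0 (t : List (List ℕ)) : ℕ := (t.getD 0 []).getD 1 0

def fwdF (v : List ℕ) (t : List (List ℕ)) : List (List ℕ) :=
  if v.getD (bot0 t - 1) 0 = 1 then mapT (relDown (bot0 t)) t.tail else t.tail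

def bwdF (v : List ℕ) (p : ℕ) (t : List (List ℕ)) : List (List ℕ) :=
  [v.length + 1, p + 1] :: (if v.getD p 0 = 1 then mapT (relUp (p + 1)) t else t)

lemma count_pair (j b y : ℕ) : List.count j [b, y]
    = (if j = b then 1 else 0) + (if j = y then 1 else 0) := by
  simp only [List.count_cons, List.count_nil, beq_iff_eq, Nat.zero_add]
  split_ifs <;> omega

lemma relDown_strict {a x y : ℕ} (hx : x ≠ a) (hy : y ≠ a) (h : x < y) :
    relDown a x < relDown a y := by unfold relDown; split_ifs <;> omega

lemma relDown_pos {a x : ℕ} (ha : 1 ≤ a) (h1 : 1 ≤ x) : 1 ≤ relDown a x := by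
  unfold relDown; split_ifs <;> omega

lemma relUp_le (a x : ℕ) : relUp a x ≤ x + 1 := by unfold relUp; split_ifs <;> omega

lemma relUp_pos (a x : ℕ) (h : 1 ≤ x) : 1 ≤ relUp a x := by unfold relUp; split_ifs <;> omega

lemma mapT_mapT (f g : ℕ → ℕ) (t : List (List ℕ)) :
    mapT f (mapT g t) = mapT (f ∘ g) t := by
  simp [mapT, List.map_map, Function.comp_def]

lemma mapT_congr_id {f : ℕ → ℕ} {t : List (List ℕ)} (h : ∀ x ∈ t.flatten, f x = x) :
    mapT f t = t := by
  unfold mapT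
  conv_rhs => rw [← List.map_id t]
  apply List.map_congr_left
  intro c hc
  conv_rhs => rw [← List.map_id c]
  exact List.map_congr_left fun x hx => h x (List.mem_flatten.mpr ⟨c, hc, hx⟩)

set_option maxHeartbeats 4000000 in
lemma key1 {u v : List ℕ} {c : ℕ} (hv : IsSnakeshape v) (hc : 1 ≤ c)
    {t : List (List ℕ)} (hS : IsSSYFT (2 :: u) t) (hC : ContentIs (v ++ [c]) t) :
    1 ≤ bot0 t ∧ bot0 t - 1 < v.length ∧ t = [v.length + 1, bot0 t] :: t.tail ∧
    (v.getD (bot0 t - 1) 0 = 1 → bot0 t ∉ t.tail.flatten) ∧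
    IsSSYFT u (fwdF v t) ∧ ContentIs (gPart v (bot0 t - 1) ++ [c - 1]) (fwdF v t) := by
  cases t with
  | nil => exact absurd hS.1 (by simp [shapeOf])
  | cons col t' =>
    obtain ⟨h1, h2, h3, h4, h5⟩ := ssyft_cons_iff.mp hS
    have hh := head_eq hS hC (by norm_num) hc
    obtain ⟨x, y, rfl⟩ := List.length_eq_two.mp h1
    have hx : x = v.length + 1 := by simpa using hh
    subst hx
    have hy : y < v.length + 1 := (List.isChain_pair (R := fun a b => b < a)).mp h2
    have hy1 : 1 ≤ y := h4 y (by simp)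
    have hcount : ∀ i, t'.flatten.count (i + 1) + List.count (i + 1) [v.length + 1, y]
        = (v ++ [c]).getD i 0 := by
      intro i
      have := hC i
      rwa [List.flatten_cons, List.count_append, Nat.add_comm] at this
    have hylt : y - 1 < v.length := by omega
    have hvy1 : 1 ≤ v.getD (y - 1) 0 := by
      have e := hcount (y - 1)
      rw [show y - 1 + 1 = y from by omega, count_pair, getD_append_nat] at e
      split_ifs at e <;> omega
    have hsnake : v.getD (y - 1) 0 = 1 ∨ v.getD (y - 1) 0 = 2 := by
      apply hv
      rw [List.getD_eq_getElem _ _ hylt]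
      exact List.getElem_mem hylt
    have hnotmem : v.getD (y - 1) 0 = 1 → y ∉ t'.flatten := by
      intro hA
      have e := hcount (y - 1)
      rw [show y - 1 + 1 = y from by omega, count_pair, getD_append_nat] at e
      have : t'.flatten.count y = 0 := by split_ifs at e <;> omega
      exact List.count_eq_zero.mp this
    refine ⟨hy1, show y - 1 < v.length by omega, rfl, hnotmem, ?_, ?_⟩
    · show IsSSYFT u (if v.getD (y - 1) 0 = 1 then mapT (relDown y) t' else t')
      rcases hsnake with hA | hB
      · rw [if_pos hA]
        have hnm := hnotmem hA
        refine mapT_ssyft h5 (relDown_mono y) ?_ ?_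
        · intro x1 hx1 y1 hy1' hlt
          exact relDown_strict (ne_of_mem_of_not_mem hx1 hnm) (ne_of_mem_of_not_mem hy1' hnm) hlt
        · intro x1 hx1
          exact relDown_pos hy1 (h5.2.2.2 x1 hx1)
      · rw [if_neg (by omega)]
        exact h5
    · show ContentIs (gPart v (y - 1) ++ [c - 1])
          (if v.getD (y - 1) 0 = 1 then mapT (relDown y) t' else t')
      simp only [gPart]
      rcases hsnake with hA | hB
      · rw [if_pos hA, if_pos hA]
        have hnm := hnotmem hA
        intro i
        rw [flatten_mapT, count_map_relDown _ _ _ hnm, getD_append_nat,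
          List.length_eraseIdx_of_lt hylt, getD_eraseIdx_nat _ _ _ hylt]
        have e1 := hcount i
        have e2 := hcount (i + 1)
        rw [count_pair, getD_append_nat] at e1 e2
        split_ifs at e1 e2 ⊢ <;> omega
      · rw [if_neg (by omega), if_neg (by omega)]
        intro i
        rw [getD_append_nat, List.length_set, getD_set_nat _ _ _ _ hylt]
        have e1 := hcount i
        rw [count_pair, getD_append_nat] at e1
        rcases eq_or_ne i (y - 1) with rfl | hne
        · split_ifs at e1 ⊢ <;> omega
        · split_ifs at e1 ⊢ <;> omega

set_option maxHeartbeats 2000000 in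
lemma key2 {u v : List ℕ} {c : ℕ} (hv : IsSnakeshape v) (hc : 1 ≤ c) {p : ℕ}
    (hp : p < v.length) {t : List (List ℕ)} (hS : IsSSYFT u t)
    (hC : ContentIs (gPart v p ++ [c - 1]) t) :
    IsSSYFT (2 :: u) (bwdF v p t) ∧ ContentIs (v ++ [c]) (bwdF v p t) := by
  have hsnake : v.getD p 0 = 1 ∨ v.getD p 0 = 2 := by
    apply hv
    rw [List.getD_eq_getElem _ _ hp]
    exact List.getElem_mem hp
  unfold bwdF
  rw [gPart] at hC
  rcases hsnake with hA | hB
  · rw [if_pos hA]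
    rw [if_pos hA] at hC
    have hm1 : 1 ≤ v.length := by omega
    have hlen : (v.eraseIdx p).length = v.length - 1 := List.length_eraseIdx_of_lt hp
    have hent : ∀ x ∈ t.flatten, x ≤ v.length := by
      intro x hx
      have := entries_le hS hC x hx
      rw [List.length_append, hlen, List.length_singleton] at this
      omega
    constructor
    · rw [ssyft_cons_iff]
      refine ⟨rfl, List.isChain_pair.mpr (by omega), ?_, ?_, ?_⟩
      · intro a ha x hx
        have ha' : v.length + 1 = a := by simpa using ha
        rw [flatten_mapT] at hx
        obtain ⟨x0, hx0, rfl⟩ := List.mem_map.mp hx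
        have h1 := hent x0 hx0
        have h2 := relUp_le (p + 1) x0
        omega
      · intro x hx
        simp only [List.mem_cons, List.not_mem_nil, or_false] at hx
        rcases hx with rfl | rfl <;> omega
      · refine mapT_ssyft hS (relUp_strictMono _).monotone
          (fun x _ y _ h => relUp_strictMono _ h) (fun x hx => relUp_pos _ _ (hS.2.2.2 x hx))
    · intro i
      rw [List.flatten_cons, List.count_append, count_pair, flatten_mapT,
        count_map_relUp, getD_append_nat]
      rcases lt_trichotomy i p with hlt | rfl | hgt
      · have e := hC i
        rw [getD_append_nat, hlen, getD_eraseIdx_nat _ _ _ hp] at e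
        split_ifs at e ⊢ <;> omega
      · split_ifs <;> omega
      · rw [show i + 1 - 1 = i from by omega]
        have e := hC (i - 1)
        rw [getD_append_nat, hlen, getD_eraseIdx_nat _ _ _ hp,
          show i - 1 + 1 = i from by omega] at e
        split_ifs at e ⊢ <;> omega
  · rw [if_neg (by omega)]
    rw [if_neg (by omega)] at hC
    have hent : ∀ x ∈ t.flatten, x ≤ v.length + 1 := by
      intro x hx
      have := entries_le hS hC x hx
      rw [List.length_append, List.length_set, List.length_singleton] at this
      omega
    constructor
    · rw [ssyft_cons_iff]
      refine ⟨rfl, List.isChain_pair.mpr (by omega), ?_, ?_, hS⟩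
      · intro a ha x hx
        have ha' : v.length + 1 = a := by simpa using ha
        have h1 := hent x hx
        omega
      · intro x hx
        simp only [List.mem_cons, List.not_mem_nil, or_false] at hx
        rcases hx with rfl | rfl <;> omega
    · intro i
      rw [List.flatten_cons, List.count_append, count_pair, getD_append_nat]
      have e := hC i
      rw [getD_append_nat, List.length_set, getD_set_nat _ _ _ _ hp] at e
      rcases eq_or_ne i p with rfl | hne
      · split_ifs at e ⊢ <;> omega
      · split_ifs at e ⊢ <;> omega

lemma rt1 {v : List ℕ} {t : List (List ℕ)} (h1 : 1 ≤ bot0 t)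
    (h3 : t = [v.length + 1, bot0 t] :: t.tail)
    (h4 : v.getD (bot0 t - 1) 0 = 1 → bot0 t ∉ t.tail.flatten) :
    bwdF v (bot0 t - 1) (fwdF v t) = t := by
  unfold bwdF fwdF
  rw [show bot0 t - 1 + 1 = bot0 t from by omega]
  by_cases hA : v.getD (bot0 t - 1) 0 = 1
  · rw [if_pos hA, if_pos hA, mapT_mapT]
    conv_rhs => rw [h3]
    congr 1
    apply mapT_congr_id
    intro x hx
    exact relUp_relDown (ne_of_mem_of_not_mem hx (h4 hA))
  · rw [if_neg hA, if_neg hA]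
    exact h3.symm

lemma rt2b (v : List ℕ) (p : ℕ) (t : List (List ℕ)) : fwdF v (bwdF v p t) = t := by
  have hb : bot0 (bwdF v p t) = p + 1 := rfl
  unfold fwdF
  rw [hb, Nat.add_sub_cancel]
  show (if v.getD p 0 = 1 then
      mapT (relDown (p+1)) (if v.getD p 0 = 1 then mapT (relUp (p + 1)) t else t)
    else (if v.getD p 0 = 1 then mapT (relUp (p + 1)) t else t)) = t
  by_cases hA : v.getD p 0 = 1
  · rw [if_pos hA, if_pos hA, mapT_mapT]
    exact mapT_congr_id fun x _ => relDown_relUp _ _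
  · rw [if_neg hA, if_neg hA]

lemma P56 (u v : List ℕ) (c : ℕ) (hv : IsSnakeshape v) (hc : 1 ≤ c) :
    Nat.card {t : List (List ℕ) // IsSSYFT (2 :: u) t ∧ ContentIs (v ++ [c]) t}
      = ∑ p : Fin v.length,
          Nat.card {t : List (List ℕ) // IsSSYFT u t ∧ ContentIs (gPart v ↑p ++ [c - 1]) t} := by
  have e : {t : List (List ℕ) // IsSSYFT (2 :: u) t ∧ ContentIs (v ++ [c]) t}
      ≃ (Σ p : Fin v.length,
          {t : List (List ℕ) // IsSSYFT u t ∧ ContentIs (gPart v ↑p ++ [c - 1]) t}) := by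
    refine ⟨fun x => ⟨⟨bot0 x.1 - 1, (key1 hv hc x.2.1 x.2.2).2.1⟩,
        ⟨fwdF v x.1, (key1 hv hc x.2.1 x.2.2).2.2.2.2⟩⟩,
      fun y => ⟨bwdF v y.1 y.2.1, key2 hv hc y.1.2 y.2.2.1 y.2.2.2⟩, ?_, ?_⟩
    · rintro ⟨t, ht⟩
      apply Subtype.ext
      exact rt1 (key1 hv hc ht.1 ht.2).1 (key1 hv hc ht.1 ht.2).2.2.1
        (key1 hv hc ht.1 ht.2).2.2.2.1
    · rintro ⟨⟨p, hp⟩, ⟨t, ht⟩⟩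
      exact Sigma.ext rfl (heq_of_eq (Subtype.ext (rt2b v p t)))
  rw [Nat.card_congr e]
  letI : ∀ p : Fin v.length,
      Fintype {t : List (List ℕ) // IsSSYFT u t ∧ ContentIs (gPart v ↑p ++ [c - 1]) t} :=
    fun p => @Fintype.ofFinite _ (finite_fiber _ _)
  rw [Nat.card_eq_fintype_card, Fintype.card_sigma]
  exact Finset.sum_congr rfl fun p _ => (Nat.card_eq_fintype_card).symm

lemma getD_append_zero (w : List ℕ) (i : ℕ) : (w ++ [0]).getD i 0 = w.getD i 0 := by
  rw [getD_append_nat]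
  split_ifs with h1 h2
  · rfl
  · rw [List.getD_eq_default _ _ (by omega)]
  · rw [List.getD_eq_default _ _ (by omega)]

lemma card_append_zero (u w : List ℕ) :
    Nat.card {t : List (List ℕ) // IsSSYFT u t ∧ ContentIs (w ++ [0]) t}
      = Nat.card {t : List (List ℕ) // IsSSYFT u t ∧ ContentIs w t} := by
  apply Nat.card_congr
  apply Equiv.subtypeEquivRight
  intro t
  apply and_congr_right
  intro _
  constructor <;> intro h i <;> have := h i
  · rwa [getD_append_zero] at this
  · rwa [getD_append_zero]

lemma sum_map_range (n : ℕ) (h : ℕ → ℕ) :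
    ((List.range n).map h).sum = ∑ p : Fin n, h ↑p := by
  rw [Fin.sum_univ_eq_sum_range]
  induction n with
  | zero => simp
  | succ n ih => rw [List.range_succ, List.map_append, List.sum_append, Finset.sum_range_succ, ih]; simp

/-- the recurrences for the Young–Fibonacci numbers `N_{u,v}`. -/

theorem YFNumber_recurrences :
    YFNumber [] [] = 1 ∧
    YFNumber [2] [2] = 0 ∧
    (∀ u v : List ℕ, IsSnakeshape u → IsSnakeshape v → u.sum = v.sum →
      YFNumber (1 :: u) (v ++ [1]) = YFNumber u v) ∧
    (∀ u v : List ℕ, IsSnakeshape u → IsSnakeshape v → u.sum = v.sum + 1 →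
      YFNumber (1 :: u) (v ++ [2]) = YFNumber u (v ++ [1])) ∧
    (∀ u v : List ℕ, IsSnakeshape u → IsSnakeshape v → u.sum + 1 = v.sum →
      YFNumber (2 :: u) (v ++ [1]) =
        ((vMinus v).map (fun w => YFNumber u w)).sum) ∧
    (∀ u v : List ℕ, IsSnakeshape u → IsSnakeshape v → u.sum = v.sum →
      YFNumber (2 :: u) (v ++ [2]) =
        ((vMinus v).map (fun w => YFNumber u (w ++ [1]))).sum) := by
  refine ⟨?_, ?_, ?_, ?_, ?_, ?_⟩
  · have key : ∀ t : List (List ℕ), (IsSSYFT [] t ∧ ContentIs [] t) ↔ t = [] := by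
      intro t
      constructor
      · rintro ⟨hS, _⟩
        have h := hS.1
        cases t with
        | nil => rfl
        | cons c t' => simp [shapeOf] at h
      · rintro rfl
        exact ⟨⟨rfl, by simp, fun i j hij hj => absurd hj (by simp), by simp⟩, fun i => by simp⟩
    haveI : Unique {t : List (List ℕ) // IsSSYFT [] t ∧ ContentIs [] t} :=
      ⟨⟨⟨[], (key []).mpr rfl⟩⟩, fun x => Subtype.ext (by rw [(key x.1).mp x.2]; rfl)⟩
    exact Nat.card_unique
  · haveI : IsEmpty {t : List (List ℕ) // IsSSYFT [2] t ∧ ContentIs [2] t} := by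
      constructor
      rintro ⟨t, hS, hC⟩
      obtain ⟨col, rfl⟩ : ∃ col, t = [col] := by
        cases t with
        | nil => exact absurd hS.1 (by simp [shapeOf])
        | cons col t' =>
          cases t' with
          | nil => exact ⟨col, rfl⟩
          | cons d t'' => exact absurd hS.1 (by simp [shapeOf])
      have hlen : col.length = 2 := by
        have := hS.1
        simp [shapeOf] at this
        exact this
      obtain ⟨b, a, rfl⟩ := List.length_eq_two.mp hlen
      have hab : a < b := (List.isChain_pair (R := fun a b => b < a)).mp (hS.2.1 _ (by simp))
      have h1 := entries_le hS hC a (by simp)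
      have h2 := entries_le hS hC b (by simp)
      have h3 := hS.2.2.2 a (by simp)
      simp only [List.length_cons, List.length_nil] at h1 h2
      omega
    exact Nat.card_of_isEmpty
  · intro u v _ _ _
    have h := P34 u v 1 le_rfl
    rw [show (1:ℕ) - 1 = 0 from rfl] at h
    exact h.trans (card_append_zero u v)
  · intro u v _ _ _
    have h := P34 u v 2 (by norm_num)
    rw [show (2:ℕ) - 1 = 1 from rfl] at h
    exact h
  · intro u v _ hv _
    have h := P56 u v 1 hv le_rfl
    rw [show (1:ℕ) - 1 = 0 from rfl] at h
    rw [show vMinus v = (List.range v.length).map (gPart v) from rfl, List.map_map,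
      sum_map_range]
    exact h.trans (Finset.sum_congr rfl fun p _ => card_append_zero u (gPart v ↑p))
  · intro u v _ hv _
    have h := P56 u v 2 hv (by norm_num)
    rw [show (2:ℕ) - 1 = 1 from rfl] at h
    rw [show vMinus v = (List.range v.length).map (gPart v) from rfl, List.map_map,
      sum_map_range]
    exact h
end
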